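/- arXiv:1804.05233 — 2 statements merged into one kernel-verified Lean document; each statement's English description precedes it below -/
import Mathlib

section
/- Let B be a C*-algebra, E a Hilbert B-module, and F a closed ternary subspace of E (a closed linear subspace with f·⟨f',f''⟩ ∈ F for all f, f', f'' ∈ F). Then B_F, the closed linear span of {⟨f,f'⟩ : f, f' ∈ F}, is a C*-subalgebra of B (closed under multiplication and adjoint); moreover F·B_F ⊆ F and F equals the closed linear span of {f·b : f ∈ F, b ∈ B_F}. -/
open scoped RightActions

/-- The closed linear span of a subset of a topological `ℂ`-module. -/
noncomputable def clSpan {M : Type*} [AddCommMonoid M] [Module ℂ M] [TopologicalSpace M]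
    (S : Set M) : Set M :=
  closure (Submodule.span ℂ S : Set M)

/-- A subset is a (complex) linear subspace. -/
def IsLinearSubspace {M : Type*} [AddCommMonoid M] [Module ℂ M] (K : Set M) : Prop :=
  (0 : M) ∈ K ∧ (∀ x ∈ K, ∀ y ∈ K, x + y ∈ K) ∧ ∀ (c : ℂ), ∀ x ∈ K, c • x ∈ K

/-- A closed two-sided ideal of a C*-algebra `B`. -/
structure IsClosedTwoSidedIdeal {B : Type*} [NonUnitalCStarAlgebra B] (I : Set B) : Prop where
  isClosed : IsClosed I
  subspace : IsLinearSubspace I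
  mul_mem_left : ∀ (b : B), ∀ a ∈ I, b * a ∈ I
  mul_mem_right : ∀ (b : B), ∀ a ∈ I, a * b ∈ I

/-- The December 2024 Mathlib `CStarModule` (right `A`-module via `Aᵐᵒᵖ`), restated because
Mathlib's `CStarModule` now means a left module. -/
class CStarModuleOld (A : outParam <| Type*) (E : Type*) [NonUnitalSemiring A] [StarRing A]
    [Module ℂ A] [AddCommGroup E] [Module ℂ E] [PartialOrder A] [SMul Aᵐᵒᵖ E] [Norm A] [Norm E]
    extends Inner A E where
  inner_add_right {x} {y} {z} : inner x (y + z) = inner x y + inner x z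
  inner_self_nonneg {x} : 0 ≤ inner x x
  inner_self {x} : inner x x = 0 ↔ x = 0
  inner_op_smul_right {a : A} {x y : E} : inner x (y <• a) = inner x y * a
  inner_smul_right_complex {z : ℂ} {x} {y} : inner x (z • y) = z • inner x y
  star_inner x y : star (inner x y) = inner y x
  norm_eq_sqrt_norm_inner_self x : ‖x‖ = √‖inner x x‖

section HilbertModule

variable (B : Type*) [NonUnitalCStarAlgebra B] [PartialOrder B] [StarOrderedRing B]
variable {E : Type*} [NormedAddCommGroup E] [NormedSpace ℂ E] [SMul Bᵐᵒᵖ E] [CStarModuleOld B E]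

/-- `K ⊆ E` is an *ideal submodule* if it is the closed linear span of
`{x <• i : x ∈ E, i ∈ I}` for some closed two-sided ideal `I` of `B`. -/
def IsIdealSubmodule (K : Set E) : Prop :=
  ∃ I : Set B, IsClosedTwoSidedIdeal I ∧
    K = clSpan {z : E | ∃ x : E, ∃ i ∈ I, z = x <• i}

/-- A *ternary ideal* of a Hilbert `B`-module `E`: a linear subspace `K` with
`x <• ⟪k, y⟫ ∈ K` for all `x y ∈ E` and `k ∈ K`. -/
def IsTernaryIdeal (K : Set E) : Prop :=
  IsLinearSubspace K ∧ ∀ (x y : E), ∀ k ∈ K, x <• (inner B k y : B) ∈ K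

/-- `B_S`: the closed linear span in `B` of all inner products of elements of `S`. -/
noncomputable def rangeIdeal (S : Set E) : Set B :=
  clSpan {b : B | ∃ k ∈ S, ∃ k' ∈ S, b = (inner B k k' : B)}

/-- The orthogonal complement of a subset of a Hilbert `B`-module. -/
def perp (S : Set E) : Set E :=
  {x : E | ∀ s ∈ S, (inner B x s : B) = 0}

end HilbertModule

/-! ### Auxiliary lemmas -/

section ModAux
variable {A : Type*} [NonUnitalCStarAlgebra A] [PartialOrder A] [StarOrderedRing A]
variable {E : Type*} [NormedAddCommGroup E] [NormedSpace ℂ E] [SMul Aᵐᵒᵖ E] [CStarModuleOld A E]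

lemma CStarModuleOld.inner_sub_right (x y z : E) :
    inner A x (y - z) = inner A x y - inner A x z :=
  (AddMonoidHom.mk' (fun w : E => inner A x w) (fun _ _ => CStarModuleOld.inner_add_right)).map_sub y z

lemma CStarModuleOld.inner_add_left (x y z : E) :
    inner A (x + y) z = inner A x z + inner A y z := by
  rw [← CStarModuleOld.star_inner z (x + y), CStarModuleOld.inner_add_right, star_add,
    CStarModuleOld.star_inner, CStarModuleOld.star_inner]

lemma CStarModuleOld.inner_sub_left (x y z : E) :
    inner A (x - y) z = inner A x z - inner A y z := by
  rw [← CStarModuleOld.star_inner z (x - y), CStarModuleOld.inner_sub_right, star_sub,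
    CStarModuleOld.star_inner, CStarModuleOld.star_inner]

@[simp] lemma CStarModuleOld.inner_op_smul_left {a : A} {x y : E} :
    inner A (x <• a) y = star a * inner A x y := by
  rw [← CStarModuleOld.star_inner y (x <• a), CStarModuleOld.inner_op_smul_right, star_mul,
    CStarModuleOld.star_inner]

lemma CStarModuleOld.isSelfAdjoint_inner_self {x : E} : IsSelfAdjoint (inner A x x) :=
  CStarModuleOld.star_inner x x

attribute [simp] CStarModuleOld.inner_op_smul_right

lemma my_op_smul_add (y : E) (a b : A) : y <• (a + b) = y <• a + y <• b := by
  have h : ∀ x : E, (inner A x (y <• (a + b) - (y <• a + y <• b)) : A) = 0 := by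
    intro x
    simp only [CStarModuleOld.inner_sub_right, CStarModuleOld.inner_add_right,
      CStarModuleOld.inner_op_smul_right, mul_add, sub_self]
  have := (CStarModuleOld.inner_self (A := A)).mp (h _)
  rwa [sub_eq_zero] at this

lemma my_op_smul_smul (y : E) (c : ℂ) (b : A) : y <• (c • b) = c • (y <• b) := by
  have h : ∀ x : E, (inner A x (y <• (c • b) - c • (y <• b)) : A) = 0 := by
    intro x
    simp only [CStarModuleOld.inner_sub_right, CStarModuleOld.inner_op_smul_right,
      CStarModuleOld.inner_smul_right_complex, mul_smul_comm, sub_self]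
  have := (CStarModuleOld.inner_self (A := A)).mp (h _)
  rwa [sub_eq_zero] at this

lemma my_op_smul_zero (y : E) : y <• (0 : A) = 0 := by
  have h : ∀ x : E, (inner A x (y <• (0 : A)) : A) = 0 := by
    intro x; rw [CStarModuleOld.inner_op_smul_right, mul_zero]
  exact (CStarModuleOld.inner_self (A := A)).mp (h _)

lemma my_norm_op_smul_le (y : E) (b : A) : ‖y <• b‖ ≤ ‖y‖ * ‖b‖ := by
  have h1 : ‖y <• b‖ = Real.sqrt ‖(inner A (y <• b) (y <• b) : A)‖ :=
    CStarModuleOld.norm_eq_sqrt_norm_inner_self _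
  have h2 : (inner A (y <• b) (y <• b) : A) = star b * (inner A y y : A) * b := by
    simp [mul_assoc]
  have h3 : ‖star b * (inner A y y : A) * b‖ ≤ ‖b‖ * ‖(inner A y y : A)‖ * ‖b‖ := by
    calc ‖star b * (inner A y y : A) * b‖ ≤ ‖star b * (inner A y y : A)‖ * ‖b‖ := norm_mul_le _ _
      _ ≤ ‖star b‖ * ‖(inner A y y : A)‖ * ‖b‖ := by gcongr; exact norm_mul_le _ _
      _ = ‖b‖ * ‖(inner A y y : A)‖ * ‖b‖ := by rw [norm_star]
  rw [h1, h2]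
  calc Real.sqrt ‖star b * (inner A y y : A) * b‖ ≤ Real.sqrt (‖b‖ * ‖(inner A y y : A)‖ * ‖b‖) :=
        Real.sqrt_le_sqrt h3
    _ = Real.sqrt (‖(inner A y y : A)‖ * (‖b‖ * ‖b‖)) := by ring_nf
    _ ≤ ‖y‖ * ‖b‖ := by
        rw [Real.sqrt_mul (norm_nonneg _), Real.sqrt_mul_self (norm_nonneg b)]
        have : Real.sqrt ‖(inner A y y : A)‖ = ‖y‖ :=
          (CStarModuleOld.norm_eq_sqrt_norm_inner_self y).symm
        rw [this]

/-- Right multiplication as a continuous linear map. -/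
noncomputable def opSmulCLM (y : E) : A →L[ℂ] E :=
  LinearMap.mkContinuous
    { toFun := fun b => y <• b
      map_add' := my_op_smul_add y
      map_smul' := fun c b => my_op_smul_smul y c b }
    ‖y‖ (fun b => my_norm_op_smul_le y b)

@[simp] lemma opSmulCLM_apply (y : E) (b : A) : opSmulCLM y b = y <• b := rfl

lemma cfcn_mem_of_closed {R : Set A} (hRcl : IsClosed R) (h0 : (0 : A) ∈ R)
    (hadd : ∀ x ∈ R, ∀ y ∈ R, x + y ∈ R) (hsmul : ∀ (c : ℝ), ∀ x ∈ R, c • x ∈ R)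
    (hmul : ∀ x ∈ R, ∀ y ∈ R, x * y ∈ R) (hstar : ∀ x ∈ R, star x ∈ R)
    {a : A} (ha : IsSelfAdjoint a) (haR : a ∈ R)
    (g : ℝ → ℝ) (hg : ContinuousOn g (quasispectrum ℝ a)) (hg0 : g 0 = 0) :
    cfcₙ g a ∈ R := by
  rw [cfcₙ_apply g a hg hg0 ha]
  have h0' : ((0 : quasispectrum ℝ a) : ℝ) = 0 := rfl
  set φ := cfcₙHom (R := ℝ) ha with hφ
  have hcont : Continuous φ := (cfcₙHom_isClosedEmbedding ha).continuous
  have hid : φ (ContinuousMapZero.id (quasispectrum ℝ a)) = a := cfcₙHom_id ha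
  apply ContinuousMapZero.induction_on_of_compact (p := fun f => φ f ∈ R)
  · simpa only [map_zero] using h0
  · rw [hid]; exact haR
  · rw [map_star, hid]; exact hstar a haR
  · intro f g hf hg; rw [map_add]; exact hadd _ hf _ hg
  · intro f g hf hg; rw [map_mul]; exact hmul _ hf _ hg
  · intro r f hf; rw [map_smul]; exact hsmul r _ hf
  · intro f hf
    have : f ∈ closure {g | φ g ∈ R} := mem_closure_iff_frequently.mpr hf
    have := map_mem_closure (t := R) hcont this (fun g hg => hg)
    rwa [hRcl.closure_eq] at this

lemma approx_norm_le (f : E) {ε : ℝ} (hε : 0 < ε) :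
    ‖f - f <• (cfcₙ (fun t : ℝ => t * (ε + t)⁻¹) (inner A f f : A))‖ ≤ Real.sqrt ε := by
  set g : ℝ → ℝ := fun t => t * (ε + t)⁻¹ with hgdef
  set a : A := (inner A f f : A) with hadef
  have ha : 0 ≤ a := CStarModuleOld.inner_self_nonneg
  have hsa : IsSelfAdjoint a := CStarModuleOld.isSelfAdjoint_inner_self
  have hspec : ∀ t ∈ quasispectrum ℝ a, 0 ≤ t := quasispectrum_nonneg_of_nonneg a ha
  have hpos : ∀ t ∈ quasispectrum ℝ a, 0 < ε + t := fun t ht => by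
    have := hspec t ht; linarith
  have hg : ContinuousOn g (quasispectrum ℝ a) :=
    continuousOn_id.mul ((continuousOn_const.add continuousOn_id).inv₀
      fun t ht => (hpos t ht).ne')
  have hg0 : g 0 = 0 := by simp [hgdef]
  set c : A := cfcₙ g a with hcdef
  have hc : IsSelfAdjoint c := cfcₙ_predicate g a
  have hinner : (inner A (f - f <• c) (f - f <• c) : A)
      = a - a * c - (c * a - c * (a * c)) := by
    simp only [CStarModuleOld.inner_sub_left, CStarModuleOld.inner_sub_right,
      CStarModuleOld.inner_op_smul_left, CStarModuleOld.inner_op_smul_right, hc.star_eq, ← hadef,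
      mul_assoc]
    noncomm_ring
  have hid : ContinuousOn (fun t : ℝ => t) (quasispectrum ℝ a) := continuousOn_id
  have hg1 : ContinuousOn (fun t => t * g t) (quasispectrum ℝ a) := hid.mul hg
  have hg2 : ContinuousOn (fun t => g t * t) (quasispectrum ℝ a) := hg.mul hid
  have hg3 : ContinuousOn (fun t => g t * (t * g t)) (quasispectrum ℝ a) := hg.mul hg1
  have hg4 : ContinuousOn (fun t => t - t * g t) (quasispectrum ℝ a) := hid.sub hg1
  have hg5 : ContinuousOn (fun t => g t * t - g t * (t * g t)) (quasispectrum ℝ a) :=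
    hg2.sub hg3
  have e0 : cfcₙ (fun t : ℝ => t) a = a := cfcₙ_id' ℝ a hsa
  have e1 : cfcₙ (fun t => t * g t) a = a * c := by
    rw [cfcₙ_mul (fun t : ℝ => t) g a hid rfl hg hg0, e0]
  have e2 : cfcₙ (fun t => g t * t) a = c * a := by
    rw [cfcₙ_mul g (fun t : ℝ => t) a hg hg0 hid rfl, e0]
  have e3 : cfcₙ (fun t => g t * (t * g t)) a = c * (a * c) := by
    rw [cfcₙ_mul g (fun t => t * g t) a hg hg0 hg1 (by simp [hg0]), e1]
  have e4 : cfcₙ (fun t => t - t * g t) a = a - a * c := by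
    rw [cfcₙ_sub (fun t : ℝ => t) (fun t => t * g t) a hid rfl hg1 (by simp [hg0]), e0, e1]
  have e5 : cfcₙ (fun t => g t * t - g t * (t * g t)) a = c * a - c * (a * c) := by
    rw [cfcₙ_sub (fun t => g t * t) (fun t => g t * (t * g t)) a hg2 (by simp [hg0])
      hg3 (by simp [hg0]), e2, e3]
  have e6 : cfcₙ (fun t => (t - t * g t) - (g t * t - g t * (t * g t))) a
      = a - a * c - (c * a - c * (a * c)) := by
    rw [cfcₙ_sub (fun t => t - t * g t) (fun t => g t * t - g t * (t * g t)) a hg4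
      (by simp [hg0]) hg5 (by simp [hg0]), e4, e5]
  have hbound : ‖cfcₙ (fun t => (t - t * g t) - (g t * t - g t * (t * g t))) a‖ ≤ ε := by
    apply norm_cfcₙ_le
    intro t ht
    have ht0 : 0 ≤ t := hspec t ht
    have htpos : 0 < ε + t := hpos t ht
    have heq : (t - t * g t) - (g t * t - g t * (t * g t)) = t * ε ^ 2 / (ε + t) ^ 2 := by
      simp only [hgdef]
      field_simp
      ring
    rw [heq, Real.norm_eq_abs, abs_of_nonneg (by positivity), div_le_iff₀ (by positivity)]
    nlinarith [sq_nonneg (ε + t), mul_nonneg ht0 hε.le]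
  have hnorm : ‖(inner A (f - f <• c) (f - f <• c) : A)‖ ≤ ε := by
    rw [hinner, ← e6]; exact hbound
  calc ‖f - f <• c‖ = Real.sqrt ‖(inner A (f - f <• c) (f - f <• c) : A)‖ :=
        CStarModuleOld.norm_eq_sqrt_norm_inner_self _
    _ ≤ Real.sqrt ε := Real.sqrt_le_sqrt hnorm

end ModAux

/-- for a closed ternary subspace `F` of `E`, `B_F` is a C*-subalgebra of `B`
(closed under multiplication and adjoint), `F <• B_F ⊆ F`, and the closed span of
`F <• B_F` equals `F`. -/
theorem ternary_subspace_range_algebra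
    {B : Type*} [NonUnitalCStarAlgebra B] [PartialOrder B] [StarOrderedRing B]
    {E : Type*} [NormedAddCommGroup E] [NormedSpace ℂ E] [SMul Bᵐᵒᵖ E]
    [CStarModuleOld B E] [CompleteSpace E] (F : Set E) (hcl : IsClosed F) (hsub : IsLinearSubspace F)
    (ht : ∀ f ∈ F, ∀ f' ∈ F, ∀ f'' ∈ F, f <• (inner B f' f'' : B) ∈ F) :
    (∀ a ∈ rangeIdeal B F, ∀ b ∈ rangeIdeal B F, a * b ∈ rangeIdeal B F) ∧
    (∀ a ∈ rangeIdeal B F, star a ∈ rangeIdeal B F) ∧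
    (∀ f ∈ F, ∀ b ∈ rangeIdeal B F, f <• b ∈ F) ∧
    clSpan {z : E | ∃ f ∈ F, ∃ b ∈ rangeIdeal B F, z = f <• b} = F := by
  obtain ⟨h0F, haddF, hsmulF⟩ := hsub
  set S : Set B := {b : B | ∃ k ∈ F, ∃ k' ∈ F, b = (inner B k k' : B)} with hS
  have hRdef : rangeIdeal B F = closure (Submodule.span ℂ S : Set B) := rfl
  -- star
  have hstar_span : ∀ x ∈ Submodule.span ℂ S, star x ∈ Submodule.span ℂ S := by
    intro x hx
    induction hx using Submodule.span_induction with
    | mem y hy =>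
      obtain ⟨k, hk, k', hk', rfl⟩ := hy
      exact Submodule.subset_span ⟨k', hk', k, hk, (CStarModuleOld.star_inner k k')⟩
    | zero => simpa using Submodule.zero_mem _
    | add x y hx hy ihx ihy => rw [star_add]; exact Submodule.add_mem _ ihx ihy
    | smul c x hx ih => rw [star_smul]; exact Submodule.smul_mem _ _ ih
  have hstar : ∀ a ∈ rangeIdeal B F, star a ∈ rangeIdeal B F := by
    intro a haR
    rw [hRdef] at haR ⊢
    exact map_mem_closure continuous_star haR hstar_span
  -- multiplication
  have hmul_span : ∀ x ∈ Submodule.span ℂ S, ∀ y ∈ Submodule.span ℂ S,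
      x * y ∈ Submodule.span ℂ S := by
    intro x hx y hy
    refine Submodule.span_induction₂
      (p := fun x y _ _ => x * y ∈ Submodule.span ℂ S) ?_ ?_ ?_ ?_ ?_ ?_ ?_ hx hy
    · rintro x y ⟨k, hk, k', hk', rfl⟩ ⟨g, hg, g', hg', rfl⟩
      have : (inner B k k' : B) * (inner B g g' : B) = inner B k (k' <• (inner B g g' : B)) :=
        (CStarModuleOld.inner_op_smul_right).symm
      rw [this]
      exact Submodule.subset_span ⟨k, hk, _, ht k' hk' g hg g' hg', rfl⟩
    · intro y hy; rw [zero_mul]; exact Submodule.zero_mem _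
    · intro x hx; rw [mul_zero]; exact Submodule.zero_mem _
    · intro x y z hx hy hz h1 h2; rw [add_mul]; exact Submodule.add_mem _ h1 h2
    · intro x y z hx hy hz h1 h2; rw [mul_add]; exact Submodule.add_mem _ h1 h2
    · intro r x y hx hy h1; rw [smul_mul_assoc]; exact Submodule.smul_mem _ _ h1
    · intro r x y hx hy h1; rw [mul_smul_comm]; exact Submodule.smul_mem _ _ h1
  have hmul : ∀ a ∈ rangeIdeal B F, ∀ b ∈ rangeIdeal B F, a * b ∈ rangeIdeal B F := by
    intro a ha b hb
    rw [hRdef] at ha hb ⊢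
    exact map_mem_closure₂ continuous_mul ha hb hmul_span
  -- F <• B_F ⊆ F
  have hFsmul : ∀ f ∈ F, ∀ b ∈ rangeIdeal B F, f <• b ∈ F := by
    intro f hf b hb
    rw [hRdef] at hb
    have hspan : ∀ b ∈ Submodule.span ℂ S, f <• b ∈ F := by
      intro b hb
      induction hb using Submodule.span_induction with
      | mem y hy =>
        obtain ⟨k, hk, k', hk', rfl⟩ := hy
        exact ht f hf k hk k' hk'
      | zero => rw [my_op_smul_zero]; exact h0F
      | add x y hx hy ihx ihy => rw [my_op_smul_add]; exact haddF _ ihx _ ihy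
      | smul c x hx ih => rw [my_op_smul_smul]; exact hsmulF c _ ih
    have hcont : Continuous (fun b : B => f <• b) := (opSmulCLM f).continuous
    have := map_mem_closure hcont hb hspan
    rwa [hcl.closure_eq] at this
  refine ⟨hmul, hstar, hFsmul, ?_⟩
  set T : Set E := {z : E | ∃ f ∈ F, ∃ b ∈ rangeIdeal B F, z = f <• b} with hT
  have hTF : T ⊆ F := by
    rintro z ⟨f, hf, b, hb, rfl⟩
    exact hFsmul f hf b hb
  have hle : (Submodule.span ℂ T : Set E) ⊆ F := by
    let F' : Submodule ℂ E :=
      { carrier := F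
        add_mem' := fun hx hy => haddF _ hx _ hy
        zero_mem' := h0F
        smul_mem' := fun c x hx => hsmulF c x hx }
    exact (Submodule.span_le (p := F')).mpr hTF
  have hsub1 : clSpan T ⊆ F := closure_minimal hle hcl
  have hsub2 : F ⊆ clSpan T := by
    intro f hf
    set a : B := (inner B f f : B) with hadef
    have ha : 0 ≤ a := CStarModuleOld.inner_self_nonneg
    have hsa : IsSelfAdjoint a := CStarModuleOld.isSelfAdjoint_inner_self
    have hspec : ∀ t ∈ quasispectrum ℝ a, 0 ≤ t := quasispectrum_nonneg_of_nonneg a ha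
    set c : ℕ → B := fun n => cfcₙ (fun t : ℝ => t * (((n : ℝ) + 1)⁻¹ + t)⁻¹) a with hcdef
    have hcR : ∀ n : ℕ, c n ∈ rangeIdeal B F := by
      intro n
      have hε : (0 : ℝ) < ((n : ℝ) + 1)⁻¹ := by positivity
      have hpos : ∀ t ∈ quasispectrum ℝ a, 0 < ((n : ℝ) + 1)⁻¹ + t := fun t ht => by
        have := hspec t ht; linarith
      have haS : a ∈ S := ⟨f, hf, f, hf, rfl⟩
      have haR : a ∈ closure (Submodule.span ℂ S : Set B) :=
        subset_closure (Submodule.subset_span haS)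
      rw [hRdef]
      refine cfcn_mem_of_closed isClosed_closure
        (subset_closure (Submodule.zero_mem _)) ?_ ?_ ?_ ?_ hsa haR _
        (continuousOn_id.mul ((continuousOn_const.add continuousOn_id).inv₀
          fun t ht => (hpos t ht).ne')) (by simp)
      · intro x hx y hy
        exact map_mem_closure₂ continuous_add hx hy
          (fun p hp q hq => Submodule.add_mem _ hp hq)
      · intro r x hx
        have : (r : ℂ) • x = r • x := Complex.coe_smul r x
        rw [← this]
        exact map_mem_closure (continuous_const_smul (r : ℂ)) hx
          (fun p hp => Submodule.smul_mem _ _ hp)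
      · intro x hx y hy
        exact map_mem_closure₂ continuous_mul hx hy hmul_span
      · intro x hx
        exact map_mem_closure continuous_star hx hstar_span
    have hdist : ∀ n : ℕ, ‖f - f <• c n‖ ≤ Real.sqrt (((n : ℝ) + 1)⁻¹) := by
      intro n
      have hε : (0 : ℝ) < ((n : ℝ) + 1)⁻¹ := by positivity
      exact approx_norm_le f hε
    have htend : Filter.Tendsto (fun n : ℕ => f <• c n) Filter.atTop (nhds f) := by
      rw [tendsto_iff_norm_sub_tendsto_zero]
      have hsqrt : Filter.Tendsto (fun n : ℕ => Real.sqrt (((n : ℝ) + 1)⁻¹))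
          Filter.atTop (nhds 0) := by
        have h1 : Filter.Tendsto (fun n : ℕ => ((n : ℝ) + 1)⁻¹) Filter.atTop (nhds 0) := by
          simpa only [one_div] using tendsto_one_div_add_atTop_nhds_zero_nat (𝕜 := ℝ)
        have h2 := (Real.continuous_sqrt.tendsto 0).comp h1
        rw [Real.sqrt_zero] at h2
        exact h2
      refine squeeze_zero (fun n => norm_nonneg _) (fun n => ?_) hsqrt
      rw [norm_sub_rev]
      exact hdist n
    have hmemT : ∀ n : ℕ, f <• c n ∈ T := fun n => ⟨f, hf, c n, hcR n, rfl⟩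
    show f ∈ closure (Submodule.span ℂ T : Set E)
    exact mem_closure_of_tendsto htend (Filter.Eventually.of_forall fun n =>
      Submodule.subset_span (hmemT n))
  exact subset_antisymm hsub1 hsub2
end

section
/- Let B be a C*-algebra, E a Hilbert B-module, and p : E → E any function satisfying ⟨x, p(y)⟩ = ⟨p(x), p(y)⟩ for all x, y ∈ E. Then p is an adjointable projection: p is additive, ℂ-homogeneous, and B-linear (p(x·b) = p(x)·b), satisfies ⟨p(x), y⟩ = ⟨x, p(y)⟩ for all x, y ∈ E, is idempotent (p∘p = p), and is bounded. -/
open scoped RightActions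

/-- The Hilbert C⋆-module class as it stood in Mathlib (December 2024): a right module
(action of `Aᵐᵒᵖ`) with an `A`-valued inner product, `A`-linear on the right in the second
variable. Mathlib's `CStarModule` has since become a left module, so the old class is restated. -/
class CStarModuleRight (A E : Type*) [NonUnitalSemiring A] [StarRing A]
    [Module ℂ A] [AddCommGroup E] [Module ℂ E] [PartialOrder A] [SMul Aᵐᵒᵖ E] [Norm A] [Norm E]
    extends Inner A E where
  inner_add_right {x} {y} {z} : inner x (y + z) = inner x y + inner x z
  inner_self_nonneg {x} : 0 ≤ inner x x
  inner_self {x} : inner x x = 0 ↔ x = 0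
  inner_op_smul_right {a : A} {x y : E} : inner x (y <• a) = inner x y * a
  inner_smul_right_complex {z : ℂ} {x} {y} : inner x (z • y) = z • inner x y
  star_inner x y : star (inner x y) = inner y x
  norm_eq_sqrt_norm_inner_self x : ‖x‖ = Real.sqrt ‖inner x x‖

theorem cmr_inner_sub_right
    {B : Type*} [NonUnitalCStarAlgebra B] [PartialOrder B] [StarOrderedRing B]
    {E : Type*} [NormedAddCommGroup E] [NormedSpace ℂ E] [SMul Bᵐᵒᵖ E]
    [CStarModuleRight B E] (x y z : E) :
    (inner B x (y - z) : B) = inner B x y - inner B x z := by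
  have h : (inner B x (y - z) : B) + inner B x z = inner B x y := by
    rw [← CStarModuleRight.inner_add_right, sub_add_cancel]
  exact eq_sub_of_add_eq h

open CStarModule Filter Topology in
/-- a map `p : E → E` with `⟨x, p y⟩ = ⟨p x, p y⟩` for all `x, y` is an
adjointable projection: additive, `ℂ`-homogeneous, `B`-linear, self-adjoint, idempotent and
bounded. -/
theorem selfAdjoint_projection_of_inner_condition
    {B : Type*} [NonUnitalCStarAlgebra B] [PartialOrder B] [StarOrderedRing B]
    {E : Type*} [NormedAddCommGroup E] [NormedSpace ℂ E] [SMul Bᵐᵒᵖ E]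
    [CStarModuleRight B E] [CompleteSpace E] (p : E → E)
    (hp : ∀ x y : E, (inner B x (p y) : B) = (inner B (p x) (p y) : B)) :
    (∀ x y : E, p (x + y) = p x + p y) ∧
    (∀ (c : ℂ) (x : E), p (c • x) = c • p x) ∧
    (∀ (x : E) (b : B), p (x <• b) = p x <• b) ∧
    (∀ x y : E, (inner B (p x) y : B) = (inner B x (p y) : B)) ∧
    (∀ x : E, p (p x) = p x) ∧
    (∃ C : ℝ, ∀ x : E, ‖p x‖ ≤ C * ‖x‖) := by
  have hsa : ∀ x y : E, (inner B (p x) y : B) = (inner B x (p y) : B) := by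
    intro x y
    calc (inner B (p x) y : B) = star (inner B y (p x) : B) := by rw [CStarModuleRight.star_inner]
      _ = star (inner B (p y) (p x) : B) := by rw [hp y x]
      _ = (inner B (p x) (p y) : B) := by rw [CStarModuleRight.star_inner]
      _ = (inner B x (p y) : B) := (hp x y).symm
  have hzero : ∀ w : E, (∀ z : E, (inner B z w : B) = 0) → w = 0 := by
    intro w h
    refine norm_eq_zero.mp ?_
    rw [CStarModuleRight.norm_eq_sqrt_norm_inner_self (A := B), h w]
    simp
  have hadd : ∀ x y : E, p (x + y) = p x + p y := by
    intro x y
    have h : ∀ z : E, (inner B z (p (x + y) - (p x + p y)) : B) = 0 := by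
      intro z
      have h1 : (inner B z (p (x+y)) : B) = inner B z (p x) + inner B z (p y) := by
        rw [← hsa, CStarModuleRight.inner_add_right, hsa, hsa]
      simp [cmr_inner_sub_right, h1, CStarModuleRight.inner_add_right]
    exact sub_eq_zero.mp (hzero _ h)
  have hsmul : ∀ (c : ℂ) (x : E), p (c • x) = c • p x := by
    intro c x
    have h : ∀ z : E, (inner B z (p (c • x) - c • p x) : B) = 0 := by
      intro z
      have h1 : (inner B z (p (c • x)) : B) = c • (inner B z (p x) : B) := by
        rw [← hsa, CStarModuleRight.inner_smul_right_complex, hsa]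
      simp [cmr_inner_sub_right, h1, CStarModuleRight.inner_smul_right_complex]
    exact sub_eq_zero.mp (hzero _ h)
  have hB : ∀ (x : E) (b : B), p (x <• b) = p x <• b := by
    intro x b
    have h : ∀ z : E, (inner B z (p (x <• b) - p x <• b) : B) = 0 := by
      intro z
      have h1 : (inner B z (p (x <• b)) : B) = (inner B z (p x) : B) * b := by
        rw [← hsa, CStarModuleRight.inner_op_smul_right, hsa]
      simp [cmr_inner_sub_right, h1, CStarModuleRight.inner_op_smul_right]
    exact sub_eq_zero.mp (hzero _ h)
  have hidem : ∀ x : E, p (p x) = p x := by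
    intro x
    have h : ∀ z : E, (inner B z (p (p x) - p x) : B) = 0 := by
      intro z
      have h1 : (inner B z (p (p x)) : B) = (inner B z (p x) : B) :=
        (hsa z (p x)).symm.trans (hp z x).symm
      simp [cmr_inner_sub_right, h1]
    exact sub_eq_zero.mp (hzero _ h)
  refine ⟨hadd, hsmul, hB, hsa, hidem, ?_⟩
  refine ⟨1, fun x => ?_⟩
  have hc1 : (inner B (p x) (x - p x) : B) = 0 := by
    rw [cmr_inner_sub_right, hsa x x, hp x x, sub_self]
  have hc2 : (inner B (x - p x) (p x) : B) = 0 := by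
    rw [← CStarModuleRight.star_inner, hc1, star_zero]
  have e1 : (inner B x x : B) = inner B x (p x) + inner B x (x - p x) := by
    rw [← CStarModuleRight.inner_add_right, add_sub_cancel]
  have e2 : (inner B (x - p x) (p x + (x - p x)) : B) = inner B (x - p x) (x - p x) := by
    rw [CStarModuleRight.inner_add_right, hc2, zero_add]
  rw [add_sub_cancel] at e2
  have e3 : (inner B x (x - p x) : B) = inner B (x - p x) (x - p x) := by
    rw [← CStarModuleRight.star_inner (x - p x) x, e2, CStarModuleRight.star_inner]
  have hle : (inner B (p x) (p x) : B) ≤ inner B x x := by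
    rw [e1, hp x x, e3]
    exact le_add_of_nonneg_right CStarModuleRight.inner_self_nonneg
  rw [one_mul, CStarModuleRight.norm_eq_sqrt_norm_inner_self (A := B) (p x),
    CStarModuleRight.norm_eq_sqrt_norm_inner_self (A := B) x]
  exact Real.sqrt_le_sqrt
    (CStarAlgebra.norm_le_norm_of_nonneg_of_le CStarModuleRight.inner_self_nonneg hle)
end
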